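/- Conversely to the previous statement: let W_a be a word with p letters a and q letters ā, let W_b be a word with q letters b and p letters b̄, and let W be the word obtained by interlacing W_a and W_b (letters of W_a at odd positions, letters of W_b at even positions, preserving order). If for every k with 1 ≤ k ≤ q the number of a's to the left of the k-th ā in W_a is strictly greater than the number of b̄'s to the left of the k-th b in W_b, then W is a balanced parenthesis word (with a,b opening and ā,b̄ closing). -/

import Mathlib

/-- The alphabet `{a, ā, b, b̄}`. -/
inductive Letter : Type
  | a | abar | b | bbar
  deriving DecidableEq

/-- Opening letters are `a` and `b`. -/
def Letter.isOpen : Letter → Bool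
  | .a => true
  | .b => true
  | _ => false

/-- The prefix of a word consisting of the letters strictly before the
`k`-th occurrence of `y` (1-indexed). -/
def takeUntilNth {α : Type*} [DecidableEq α] (y : α) : ℕ → List α → List α
  | _, [] => []
  | k, z :: t =>
    if z = y then (if k ≤ 1 then [] else z :: takeUntilNth y (k-1) t)
    else z :: takeUntilNth y k t

/-- Interlacing of two words: `u₁ v₁ u₂ v₂ ⋯`. -/
def interlace {α : Type*} : List α → List α → List α
  | [], v => v
  | x :: u, v => x :: interlace v u
  termination_by u v => u.length + v.length

theorem interlace_perm {α : Type*} : ∀ u v : List α, (interlace u v).Perm (u ++ v)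
  | [], v => by simp [interlace]
  | x :: u, v => by
    simp only [interlace, List.cons_append]
    exact ((interlace_perm v u).trans List.perm_append_comm).cons x
  termination_by u v => u.length + v.length

theorem interlace_take_countP {α : Type*} :
    ∀ (u v : List α) (t : ℕ) (f : α → Bool), v.length ≤ u.length → u.length ≤ v.length + 1 →
      ((interlace u v).take t).countP f
        = (u.take ((t+1)/2)).countP f + (v.take (t/2)).countP f
  | [], v, t, f, h1, h2 => by
    have : v = [] := List.eq_nil_of_length_eq_zero (Nat.le_zero.mp (by simpa using h1))
    simp [this, interlace]
  | x :: u, v, t, f, h1, h2 => by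
    cases t with
    | zero => simp
    | succ s =>
      have ih := interlace_take_countP v u s f (by simpa using h2) (by simpa using h1)
      have h3 : (s + 1 + 1)/2 = s/2 + 1 := by omega
      simp only [interlace, List.take_succ_cons, List.countP_cons, ih, h3]
      omega
  termination_by u v => u.length + v.length

theorem count_pair {α : Type*} [DecidableEq α] {u v : α} (huv : u ≠ v) :
    ∀ l : List α, (∀ x ∈ l, x = u ∨ x = v) → l.count u + l.count v = l.length := by
  intro l
  induction l with
  | nil => simp
  | cons z t ih =>
    intro h
    have ht := ih (fun x hx => h x (List.mem_cons_of_mem _ hx))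
    rcases h z List.mem_cons_self with rfl | rfl <;>
      simp [List.count_cons, huv, huv.symm] <;> omega

theorem count_takeUntilNth {α : Type*} [DecidableEq α] (y : α) :
    ∀ (l : List α) (k : ℕ), 1 ≤ k → k ≤ l.count y → (takeUntilNth y k l).count y = k - 1 := by
  intro l
  induction l with
  | nil => intro k h1 h2; simp at h2; omega
  | cons z t ih =>
    intro k h1 h2
    simp only [takeUntilNth]
    by_cases hz : z = y
    · subst hz
      simp only [if_pos rfl]
      by_cases hk : k ≤ 1
      · rw [if_pos hk]; simp; omega
      · rw [if_neg hk]
        have := ih (k-1) (by omega) (by simp [List.count_cons] at h2; omega)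
        simp [List.count_cons, this]; omega
    · rw [if_neg hz]
      have := ih k h1 (by simpa [List.count_cons, hz] using h2)
      simp [List.count_cons, hz, this]

theorem length_takeUntilNth {α : Type*} [DecidableEq α] (y : α) :
    ∀ (l : List α) (m k : ℕ), 1 ≤ k → k ≤ (l.take m).count y →
      (takeUntilNth y k l).length + 1 ≤ (l.take m).length := by
  intro l
  induction l with
  | nil => intro m k h1 h2; simp at h2; omega
  | cons z t ih =>
    intro m k h1 h2
    cases m with
    | zero => simp at h2; omega
    | succ m' =>
      simp only [List.take_succ_cons] at h2 ⊢
      simp only [takeUntilNth]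
      by_cases hz : z = y
      · subst hz
        simp only [if_pos rfl]
        by_cases hk : k ≤ 1
        · rw [if_pos hk]; simp
        · rw [if_neg hk]
          have := ih m' (k-1) (by omega) (by simp [List.count_cons] at h2; omega)
          simpa using this
      · rw [if_neg hz]
        have := ih m' k h1 (by simpa [List.count_cons, hz] using h2)
        simpa using this

theorem takeUntilNth_sublist {α : Type*} [DecidableEq α] (y : α) :
    ∀ (l : List α) (k : ℕ), (takeUntilNth y k l).Sublist l := by
  intro l
  induction l with
  | nil => intro k; simp [takeUntilNth]
  | cons z t ih =>
    intro k
    simp only [takeUntilNth]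
    by_cases hz : z = y
    · rw [if_pos hz]
      by_cases hk : k ≤ 1
      · rw [if_pos hk]; exact List.nil_sublist _
      · rw [if_neg hk]; exact (ih (k-1)).cons₂ z
    · rw [if_neg hz]; exact (ih k).cons₂ z

theorem take_isPrefix_takeUntilNth {α : Type*} [DecidableEq α] (y : α) :
    ∀ (l : List α) (n k : ℕ), (l.take n).count y < k → (l.take n) <+: takeUntilNth y k l := by
  intro l
  induction l with
  | nil =>
    intro n k _
    simp only [List.take_nil]
    exact List.nil_prefix
  | cons z t ih =>
    intro n k h
    cases n with
    | zero => simp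
    | succ n' =>
      simp only [List.take_succ_cons] at h ⊢
      simp only [takeUntilNth]
      by_cases hz : z = y
      · subst hz
        rw [if_pos rfl, if_neg (by simp [List.count_cons] at h; omega)]
        exact (List.cons_prefix_cons).mpr ⟨rfl, ih n' (k-1) (by simp [List.count_cons] at h; omega)⟩
      · rw [if_neg hz]
        exact (List.cons_prefix_cons).mpr ⟨rfl, ih n' k (by simpa [List.count_cons, hz] using h)⟩

theorem countP_eq_counts (o c : Letter) (ho : o.isOpen = true) (hc : c.isOpen = false) :
    ∀ l : List Letter, (∀ x ∈ l, x = o ∨ x = c) →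
      l.countP (fun x => x.isOpen) = l.count o ∧
        l.countP (fun x => ! x.isOpen) = l.count c := by
  intro l
  induction l with
  | nil => simp
  | cons z t ih =>
    intro h
    have hoc : o ≠ c := fun e => by rw [e, hc] at ho; simp at ho
    obtain ⟨e1, e2⟩ := ih (fun x hx => h x (List.mem_cons_of_mem _ hx))
    rcases h z List.mem_cons_self with rfl | rfl <;>
      simp [List.countP_cons, List.count_cons, ho, hc, e1, e2, hoc, hoc.symm]

/-- If `W_a` has `p` `a`'s and `q` `ā`'s, `W_b` has `q` `b`'s and `p` `b̄`'s, and for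
every `1 ≤ k ≤ q` the number of `a`'s left of the `k`-th `ā` in `W_a` is strictly
greater than the number of `b̄`'s left of the `k`-th `b` in `W_b`, then the
interlacing of `W_a` and `W_b` is a balanced parenthesis word. -/
theorem interlace_dyck (p q : ℕ) (Wa Wb : List Letter)
    (haAlpha : ∀ l ∈ Wa, l = Letter.a ∨ l = Letter.abar)
    (hbAlpha : ∀ l ∈ Wb, l = Letter.b ∨ l = Letter.bbar)
    (ha1 : Wa.count Letter.a = p) (ha2 : Wa.count Letter.abar = q)
    (hb1 : Wb.count Letter.b = q) (hb2 : Wb.count Letter.bbar = p)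
    (hcond : ∀ k : ℕ, 1 ≤ k → k ≤ q →
      (takeUntilNth Letter.b k Wb).count Letter.bbar <
        (takeUntilNth Letter.abar k Wa).count Letter.a) :
    ((interlace Wa Wb).countP (fun l => l.isOpen) =
        (interlace Wa Wb).countP (fun l => ! l.isOpen)) ∧
      (∀ t : ℕ, ((interlace Wa Wb).take t).countP (fun l => ! l.isOpen) ≤
        ((interlace Wa Wb).take t).countP (fun l => l.isOpen)) := by
  have hab : Letter.a ≠ Letter.abar := by decide
  have hbb : Letter.b ≠ Letter.bbar := by decide
  have hlenA : Wa.count Letter.a + Wa.count Letter.abar = Wa.length :=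
    count_pair hab Wa haAlpha
  have hlenB : Wb.count Letter.b + Wb.count Letter.bbar = Wb.length :=
    count_pair hbb Wb hbAlpha
  have hlen1 : Wb.length ≤ Wa.length := by omega
  have hlen2 : Wa.length ≤ Wb.length + 1 := by omega
  obtain ⟨ca1, ca2⟩ := countP_eq_counts Letter.a Letter.abar rfl rfl Wa haAlpha
  obtain ⟨cb1, cb2⟩ := countP_eq_counts Letter.b Letter.bbar rfl rfl Wb hbAlpha
  constructor
  · have hperm := interlace_perm Wa Wb
    rw [hperm.countP_eq, hperm.countP_eq, List.countP_append, List.countP_append,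
      ca1, ca2, cb1, cb2]
    omega
  · intro t
    rw [interlace_take_countP Wa Wb t _ hlen1 hlen2,
      interlace_take_countP Wa Wb t _ hlen1 hlen2]
    set m := (t+1)/2 with hm
    set n := t/2 with hn
    have hsubA : ∀ x ∈ Wa.take m, x = Letter.a ∨ x = Letter.abar :=
      fun x hx => haAlpha x (List.take_subset _ _ hx)
    have hsubB : ∀ x ∈ Wb.take n, x = Letter.b ∨ x = Letter.bbar :=
      fun x hx => hbAlpha x (List.take_subset _ _ hx)
    obtain ⟨ea1, ea2⟩ := countP_eq_counts Letter.a Letter.abar rfl rfl (Wa.take m) hsubA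
    obtain ⟨eb1, eb2⟩ := countP_eq_counts Letter.b Letter.bbar rfl rfl (Wb.take n) hsubB
    rw [ea1, ea2, eb1, eb2]
    have hMA : (Wa.take m).count Letter.a + (Wa.take m).count Letter.abar
        = (Wa.take m).length := count_pair hab _ hsubA
    have hNB : (Wb.take n).count Letter.b + (Wb.take n).count Letter.bbar
        = (Wb.take n).length := count_pair hbb _ hsubB
    have hlm : (Wa.take m).length = min m Wa.length := List.length_take
    have hln : (Wb.take n).length = min n Wb.length := List.length_take
    have hmn : n ≤ m ∧ m ≤ n + 1 := by omega
    have hMN : (Wb.take n).length ≤ (Wa.take m).length ∧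
        (Wa.take m).length ≤ (Wb.take n).length + 1 := by omega
    set i := (Wa.take m).count Letter.abar with hi
    set j := (Wb.take n).count Letter.b with hj
    rcases le_or_gt i j with h | h
    · omega
    · have hiq : i ≤ q := by
        rw [← ha2]
        exact (List.take_sublist m Wa).count_le Letter.abar
      have h1k : 1 ≤ i := by omega
      have hc := hcond i h1k hiq
      have hB1 : (takeUntilNth Letter.abar i Wa).count Letter.abar = i - 1 :=
        count_takeUntilNth Letter.abar Wa i h1k (by omega)
      have hB2 : (takeUntilNth Letter.abar i Wa).length + 1 ≤ (Wa.take m).length :=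
        length_takeUntilNth Letter.abar Wa m i h1k (le_of_eq hi)
      have hTUsub : ∀ x ∈ takeUntilNth Letter.abar i Wa, x = Letter.a ∨ x = Letter.abar :=
        fun x hx => haAlpha x ((takeUntilNth_sublist Letter.abar Wa i).subset hx)
      have hsum : (takeUntilNth Letter.abar i Wa).count Letter.a + (i - 1)
          = (takeUntilNth Letter.abar i Wa).length := by
        rw [← hB1]; exact count_pair hab _ hTUsub
      have hpre := take_isPrefix_takeUntilNth Letter.b Wb n i (by omega)
      have hc' : (Wb.take n).count Letter.bbar ≤ (takeUntilNth Letter.b i Wb).count Letter.bbar :=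
        hpre.sublist.count_le Letter.bbar
      omega
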